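/- In the symmetric group S₆, the permutations σ₁ = (1 2 3), σ₂ = (2 5 3), σ₃ = (3 6 5), σ₄ = (3 5 6), σ₅ = (1 4 5), σ₆ = (3 5 4) each have cycle structure [1,1,1,3], satisfy σ₁·σ₂·σ₃·σ₄·σ₅·σ₆ = identity, and the subgroup they generate acts transitively on {1,…,6}. Hence there exists a transitive product-one tuple in S₆ of length 6 with ramification type [[1³,3]⁶]. -/

import Mathlib

/-- Cycle structure of a permutation of `Fin d`, including fixed points as 1-cycles. -/
def fullCycleType {d : ℕ} (σ : Equiv.Perm (Fin d)) : Multiset ℕ :=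
  σ.cycleType + Multiset.replicate (d - σ.cycleType.sum) 1

/-- Product of a list of permutations, composed left-to-right
(apply the first permutation first). -/
def seqProd {d : ℕ} (l : List (Equiv.Perm (Fin d))) : Equiv.Perm (Fin d) :=
  l.foldr (fun σ acc => σ.trans acc) (Equiv.refl (Fin d))


def σ1 : Equiv.Perm (Fin 6) := c[0, 1, 2]

def σ2 : Equiv.Perm (Fin 6) := c[1, 4, 2]

def σ3 : Equiv.Perm (Fin 6) := c[2, 5, 4]

def σ4 : Equiv.Perm (Fin 6) := c[2, 4, 5]

def σ5 : Equiv.Perm (Fin 6) := c[0, 3, 4]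

def σ6 : Equiv.Perm (Fin 6) := c[2, 4, 3]



lemma fullCycleType_of_threeCycle (σ : Equiv.Perm (Fin 6))
    (h : σ.cycleType = {3}) : fullCycleType σ = ({1, 1, 1, 3} : Multiset ℕ) := by
  unfold fullCycleType
  rw [h]
  decide

lemma cycleType_aux (l : List (Fin 6)) (hn : l.Nodup) (hl : l.length = 3) :
    (l.formPerm).cycleType = {3} := by
  have hc : (l.formPerm).IsCycle := List.isCycle_formPerm hn (by omega)
  rw [hc.cycleType, List.support_formPerm_of_nodup l hn
    (by intro x hx; rw [hx] at hl; simp at hl), List.card_toFinset, hn.dedup, hl]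

lemma trans_aux (H : Subgroup (Equiv.Perm (Fin 6)))
    (h1 : σ1 ∈ H) (h3 : σ3 ∈ H) (h5 : σ5 ∈ H) :
    ∀ x y : Fin 6, ∃ g ∈ H, g x = y := by
  have key : ∀ y : Fin 6, ∃ g ∈ H, g 0 = y := by
    intro y
    fin_cases y
    · exact ⟨1, one_mem H, rfl⟩
    · exact ⟨σ1, h1, by decide⟩
    · exact ⟨σ1 * σ1, mul_mem h1 h1, by decide⟩
    · exact ⟨σ5, h5, by decide⟩
    · exact ⟨σ5 * σ5, mul_mem h5 h5, by decide⟩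
    · exact ⟨σ3 * σ1 * σ1, mul_mem (mul_mem h3 h1) h1, by decide⟩
  intro x y
  obtain ⟨gx, hgx, hx⟩ := key x
  obtain ⟨gy, hgy, hy⟩ := key y
  refine ⟨gy * gx⁻¹, mul_mem hgy (inv_mem hgx), ?_⟩
  rw [Equiv.Perm.mul_apply, ← hx, Equiv.Perm.inv_def, Equiv.symm_apply_apply, hy]

theorem stmt15 :
    (fullCycleType σ1 = ({1, 1, 1, 3} : Multiset ℕ) ∧ fullCycleType σ2 = ({1, 1, 1, 3} : Multiset ℕ) ∧ fullCycleType σ3 = ({1, 1, 1, 3} : Multiset ℕ) ∧ fullCycleType σ4 = ({1, 1, 1, 3} : Multiset ℕ) ∧ fullCycleType σ5 = ({1, 1, 1, 3} : Multiset ℕ) ∧ fullCycleType σ6 = ({1, 1, 1, 3} : Multiset ℕ)) ∧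
    seqProd [σ1, σ2, σ3, σ4, σ5, σ6] = Equiv.refl (Fin 6) ∧
    (∀ x y : Fin 6, ∃ g ∈ Subgroup.closure ({σ1, σ2, σ3, σ4, σ5, σ6} : Set (Equiv.Perm (Fin 6))), g x = y) ∧
    (∃ τ : Fin 6 → Equiv.Perm (Fin 6),
      (∀ i, fullCycleType (τ i) = ({1, 1, 1, 3} : Multiset ℕ)) ∧
      seqProd (List.ofFn τ) = Equiv.refl (Fin 6) ∧
      (∀ x y : Fin 6, ∃ g ∈ Subgroup.closure (Set.range τ), g x = y)) := by
  have hct : ∀ σ ∈ [σ1, σ2, σ3, σ4, σ5, σ6],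
      fullCycleType σ = ({1, 1, 1, 3} : Multiset ℕ) := by
    intro σ hσ
    fin_cases hσ <;>
      exact fullCycleType_of_threeCycle _ (cycleType_aux _ (by decide) rfl)
  refine ⟨⟨hct σ1 (by simp), hct σ2 (by simp), hct σ3 (by simp), hct σ4 (by simp),
    hct σ5 (by simp), hct σ6 (by simp)⟩, by decide, ?_, ?_⟩
  · exact trans_aux _ (Subgroup.subset_closure (by simp))
      (Subgroup.subset_closure (by simp)) (Subgroup.subset_closure (by simp))
  · refine ⟨![σ1, σ2, σ3, σ4, σ5, σ6], ?_, by decide, ?_⟩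
    · intro i; fin_cases i <;> simp <;>
        exact fullCycleType_of_threeCycle _ (cycleType_aux _ (by decide) rfl)
    · exact trans_aux _ (Subgroup.subset_closure ⟨0, rfl⟩)
        (Subgroup.subset_closure ⟨2, rfl⟩) (Subgroup.subset_closure ⟨4, rfl⟩)
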